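/- arXiv:1604.06762 — 4 statements merged into one kernel-verified Lean document; each statement's English description precedes it below -/
import Mathlib

section
/- Perturbation of discrete dichotomy Green's functions: Let (T_n)_{n∈ℤ} and (T̃_n)_{n∈ℤ} be sequences of bounded operators on a Banach space Y whose associated evolution operators T_{n,m} = T_{n−1}⋯T_m (n ≥ m) both admit exponential dichotomies with Green's functions G_{n,m} and G̃_{n,m} satisfying ‖G_{n,m}‖ ≤ M e^{−β d|n−m|} and ‖G̃_{n,m}‖ ≤ M e^{−β d|n−m|} for some M ≥ 1, β > 0, d > 0. If the formal identity G̃_{n,m} − G_{n,m} = Σ_{k∈ℤ} G_{n,k+1}(T̃_k − T_k) G̃_{k,m} holds, then ‖G̃_{n,m} − G_{n,m}‖ ≤ M₂ e^{−β₂ d|n−m|} sup_k ‖T̃_k − T_k‖ for all n, m ∈ ℤ, where M₂ and β₂ ≤ β depend only on M, β, d. -/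
open Real

lemma expabs_nat_summable {a : ℝ} (ha : 0 < a) :
    Summable (fun n : ℕ => exp (-a * (n : ℝ))) := by
  have hg : Summable (fun n : ℕ => (exp (-a)) ^ n) := by
    apply summable_geometric_of_lt_one (le_of_lt (exp_pos _))
    exact Real.exp_lt_one_iff.2 (by linarith)
  apply hg.congr
  intro n
  rw [← Real.exp_nat_mul]
  ring_nf

lemma expabs_summable {a : ℝ} (ha : 0 < a) :
    Summable (fun k : ℤ => exp (-a * |(k : ℝ)|)) := by
  apply Summable.of_nat_of_neg
  · apply (expabs_nat_summable ha).congr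
    intro n
    push_cast
    rw [abs_of_nonneg (by positivity : (0:ℝ) ≤ (n : ℝ))]
  · apply (expabs_nat_summable ha).congr
    intro n
    push_cast
    rw [abs_neg, abs_of_nonneg (by positivity : (0:ℝ) ≤ (n : ℝ))]

lemma expabs_shift_summable {a : ℝ} (ha : 0 < a) (m : ℤ) :
    Summable (fun k : ℤ => exp (-a * |(k : ℝ) - m|)) := by
  have hinj : Function.Injective (fun k : ℤ => k - m) := fun x y h => by
    simpa using h
  have := (expabs_summable ha).comp_injective hinj
  apply this.congr
  intro k
  simp only [Function.comp]
  push_cast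
  ring_nf

lemma expabs_shift_tsum {a : ℝ} (ha : 0 < a) (m : ℤ) :
    (∑' k : ℤ, exp (-a * |(k : ℝ) - m|)) = ∑' k : ℤ, exp (-a * |(k : ℝ)|) := by
  rw [← (Equiv.subRight m).tsum_eq (fun k : ℤ => exp (-a * |(k : ℝ)|))]
  congr 1
  ext k
  simp only [Equiv.subRight_apply]
  push_cast
  ring_nf

/-- Perturbation of discrete dichotomy Green's functions: `M₂` and `β₂`
depend only on `M`, `β`, `d`. -/
theorem stmt9 (M β d : ℝ) (hM : 1 ≤ M) (hβ : 0 < β) (hd : 0 < d) :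
    ∃ M₂ β₂ : ℝ, 0 < M₂ ∧ 0 < β₂ ∧ β₂ ≤ β ∧
      ∀ (Y : Type) (_ : NormedAddCommGroup Y) (_ : NormedSpace ℝ Y)
        (T T' : ℤ → Y →L[ℝ] Y) (G G' : ℤ → ℤ → Y →L[ℝ] Y) (ε : ℝ),
        (∀ n m : ℤ, ‖G n m‖ ≤ M * exp (-β * d * |(n : ℝ) - m|)) →
        (∀ n m : ℤ, ‖G' n m‖ ≤ M * exp (-β * d * |(n : ℝ) - m|)) →
        (∀ k : ℤ, ‖T' k - T k‖ ≤ ε) →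
        (∀ n m : ℤ, HasSum
          (fun k : ℤ => (G n (k + 1)).comp ((T' k - T k).comp (G' k m)))
          (G' n m - G n m)) →
        ∀ n m : ℤ,
          ‖G' n m - G n m‖ ≤ M₂ * exp (-β₂ * d * |(n : ℝ) - m|) * ε := by
  set a : ℝ := β * d / 2 with ha_def
  have ha : 0 < a := by positivity
  set S : ℝ := ∑' k : ℤ, exp (-a * |(k : ℝ)|) with hS_def
  have hSsum := expabs_summable ha
  have hSpos : 0 < S := by
    have h1 : exp (-a * |((0 : ℤ) : ℝ)|) ≤ S := Summable.le_tsum hSsum 0 (fun _ _ => (exp_pos _).le)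
    simp only [Int.cast_zero, abs_zero, mul_zero, exp_zero] at h1
    linarith
  refine ⟨M ^ 2 * exp a * S, β / 2, by positivity, by positivity, by linarith, ?_⟩
  intro Y _ _ T T' G G' ε hG hG' hT hHS n m
  have hε : 0 ≤ ε := le_trans (norm_nonneg _) (hT 0)
  set f : ℤ → Y →L[ℝ] Y := fun k => (G n (k + 1)).comp ((T' k - T k).comp (G' k m)) with hf
  set c : ℝ := M ^ 2 * ε * exp a * exp (-a * |(n : ℝ) - m|) with hc
  have hbnd : ∀ k : ℤ, ‖f k‖ ≤ c * exp (-a * |(k : ℝ) - m|) := by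
    intro k
    have h1 : ‖f k‖ ≤ ‖G n (k + 1)‖ * (‖T' k - T k‖ * ‖G' k m‖) :=
      le_trans (ContinuousLinearMap.opNorm_comp_le _ _)
        (mul_le_mul_of_nonneg_left (ContinuousLinearMap.opNorm_comp_le _ _) (norm_nonneg _))
    have hGn := hG n (k + 1)
    push_cast at hGn
    have h2 : ‖G n (k + 1)‖ * (‖T' k - T k‖ * ‖G' k m‖) ≤
        (M * exp (-β * d * |(n : ℝ) - ((k : ℝ) + 1)|)) *
          (ε * (M * exp (-β * d * |(k : ℝ) - m|))) :=
      mul_le_mul hGn (mul_le_mul (hT k) (hG' k m) (norm_nonneg _) hε)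
        (by positivity) (by positivity)
    have key : exp (-β * d * |(n : ℝ) - ((k : ℝ) + 1)|) * exp (-β * d * |(k : ℝ) - m|) ≤
        exp a * exp (-a * |(n : ℝ) - m|) * exp (-a * |(k : ℝ) - m|) := by
      rw [← Real.exp_add, ← Real.exp_add, ← Real.exp_add]
      apply exp_le_exp.2
      have hA : (0:ℝ) ≤ |(n : ℝ) - ((k : ℝ) + 1)| := abs_nonneg _
      have hB : (0:ℝ) ≤ |(k : ℝ) - m| := abs_nonneg _
      have htri : |(n : ℝ) - m| ≤ |(n : ℝ) - ((k : ℝ) + 1)| + |(k : ℝ) - m| + 1 := by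
        calc |(n : ℝ) - m| = |((n : ℝ) - ((k : ℝ) + 1)) + (((k : ℝ) - m) + 1)| := by ring_nf
        _ ≤ |(n : ℝ) - ((k : ℝ) + 1)| + |((k : ℝ) - m) + 1| := abs_add_le _ _
        _ ≤ |(n : ℝ) - ((k : ℝ) + 1)| + (|(k : ℝ) - m| + |(1:ℝ)|) :=
            add_le_add_right (abs_add_le _ _) _
        _ = |(n : ℝ) - ((k : ℝ) + 1)| + |(k : ℝ) - m| + 1 := by rw [abs_one]; ring
      have h2a : -β * d = -(2 * a) := by rw [ha_def]; ring
      rw [h2a]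
      nlinarith [mul_le_mul_of_nonneg_left htri ha.le, mul_nonneg ha.le hA,
        mul_nonneg ha.le hB]
    calc ‖f k‖ ≤ (M * exp (-β * d * |(n : ℝ) - ((k : ℝ) + 1)|)) *
          (ε * (M * exp (-β * d * |(k : ℝ) - m|))) := le_trans h1 h2
      _ = M ^ 2 * ε * (exp (-β * d * |(n : ℝ) - ((k : ℝ) + 1)|) *
            exp (-β * d * |(k : ℝ) - m|)) := by ring
      _ ≤ M ^ 2 * ε * (exp a * exp (-a * |(n : ℝ) - m|) * exp (-a * |(k : ℝ) - m|)) := by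
          apply mul_le_mul_of_nonneg_left key (by positivity)
      _ = c * exp (-a * |(k : ℝ) - m|) := by rw [hc]; ring
  have hgsum : Summable (fun k : ℤ => c * exp (-a * |(k : ℝ) - m|)) :=
    (expabs_shift_summable ha m).mul_left c
  have hfnormsum : Summable (fun k : ℤ => ‖f k‖) :=
    Summable.of_nonneg_of_le (fun k => norm_nonneg _) hbnd hgsum
  have heq : G' n m - G n m = ∑' k, f k := ((hHS n m).tsum_eq).symm
  calc ‖G' n m - G n m‖ = ‖∑' k, f k‖ := by rw [heq]
    _ ≤ ∑' k, ‖f k‖ := norm_tsum_le_tsum_norm hfnormsum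
    _ ≤ ∑' k : ℤ, c * exp (-a * |(k : ℝ) - m|) := Summable.tsum_le_tsum hbnd hfnormsum hgsum
    _ = c * S := by rw [tsum_mul_left, expabs_shift_tsum ha m, hS_def]
    _ = M ^ 2 * exp a * S * exp (-(β / 2) * d * |(n : ℝ) - m|) * ε := by
        rw [hc]
        have : -a * |(n : ℝ) - m| = -(β / 2) * d * |(n : ℝ) - m| := by rw [ha_def]; ring
        rw [this]; ring
end

section
/- Beating exclusion estimate: Suppose τ : ℝ_{≥0} → ℝ is of the form τ(r) = θ₀ + b·r with b > 0 (as a function of r = ‖u‖²_{L²}), and suppose u₁, u₂ ≥ 0 in L²(0,π) with t₁ = τ(‖u₁‖²), t₂ = τ(‖u₂‖²), t₁ < t₂, ‖u₂ − ũ‖ ≤ M₂(t₂ − t₁) and ‖u₂ + ũ‖ ≤ M₃, where ũ satisfies τ(‖ũ‖²) − τ(‖u₁‖²) ≤ b((1−a)² − 1)‖u₁‖² with 0 < a < 2. If b·M₂·M₃ < 1, then t₂ − t₁ ≤ b((1−a)² − 1)‖u₁‖²/(1 − b M₂ M₃); in particular, if (1−a)² < 1 and ‖u₁‖ > 0, this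 yields t₂ − t₁ < 0, a contradiction, so the solution cannot meet the surface twice. -/
theorem stmt13 {H : Type*} [NormedAddCommGroup H] [InnerProductSpace ℝ H]
    (τ : ℝ → ℝ) (θ₀ b a M₂ M₃ t₁ t₂ : ℝ) (u₁ u₂ utld : H)
    (hb : 0 < b) (ha0 : 0 < a) (ha2 : a < 2)
    (hτ : ∀ r : ℝ, τ r = θ₀ + b * r)
    (ht₁ : t₁ = τ (‖u₁‖ ^ 2)) (ht₂ : t₂ = τ (‖u₂‖ ^ 2))
    (ht12 : t₁ < t₂)
    (hdiff : ‖u₂ - utld‖ ≤ M₂ * (t₂ - t₁))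
    (hsum : ‖u₂ + utld‖ ≤ M₃)
    (htld : τ (‖utld‖ ^ 2) - τ (‖u₁‖ ^ 2) ≤ b * ((1 - a) ^ 2 - 1) * ‖u₁‖ ^ 2)
    (hsmall : b * M₂ * M₃ < 1) :
    t₂ - t₁ ≤ b * ((1 - a) ^ 2 - 1) * ‖u₁‖ ^ 2 / (1 - b * M₂ * M₃) ∧
      ((1 - a) ^ 2 < 1 → 0 < ‖u₁‖ → False) := by
  have hid : (inner ℝ (u₂ - utld) (u₂ + utld) : ℝ) = ‖u₂‖ ^ 2 - ‖utld‖ ^ 2 := by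
    rw [inner_sub_left, inner_add_right, inner_add_right,
      real_inner_self_eq_norm_sq, real_inner_self_eq_norm_sq,
      real_inner_comm utld u₂]
    ring
  have hcs : |‖u₂‖ ^ 2 - ‖utld‖ ^ 2| ≤ ‖u₂ - utld‖ * ‖u₂ + utld‖ := by
    rw [← hid]; exact abs_real_inner_le_norm _ _
  have h1 : ‖u₂ - utld‖ * ‖u₂ + utld‖ ≤ M₂ * (t₂ - t₁) * M₃ :=
    mul_le_mul hdiff hsum (norm_nonneg _) (le_trans (norm_nonneg _) hdiff)
  have hτ2 : b * (‖u₂‖ ^ 2 - ‖utld‖ ^ 2) ≤ b * (M₂ * (t₂ - t₁) * M₃) :=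
    mul_le_mul_of_nonneg_left (le_trans (le_abs_self _) (le_trans hcs h1)) hb.le
  have key : (1 - b * M₂ * M₃) * (t₂ - t₁) ≤ b * ((1 - a) ^ 2 - 1) * ‖u₁‖ ^ 2 := by
    have e : t₂ - t₁ = b * (‖u₂‖ ^ 2 - ‖utld‖ ^ 2) + (τ (‖utld‖ ^ 2) - τ (‖u₁‖ ^ 2)) := by
      rw [ht₁, ht₂, hτ, hτ, hτ]; ring
    nlinarith [hτ2, htld]
  have hpos : 0 < 1 - b * M₂ * M₃ := by linarith
  have main : t₂ - t₁ ≤ b * ((1 - a) ^ 2 - 1) * ‖u₁‖ ^ 2 / (1 - b * M₂ * M₃) :=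
    (le_div_iff₀' hpos).mpr key
  refine ⟨main, fun hlt hn => ?_⟩
  have hp := mul_pos (mul_pos hb (by linarith : (0:ℝ) < 1 - (1 - a) ^ 2)) (pow_pos hn 2)
  have : b * ((1 - a) ^ 2 - 1) * ‖u₁‖ ^ 2 < 0 := by nlinarith
  nlinarith [key]
end

section
/- Shift operator estimate in the fractional power scale of the Dirichlet Laplacian on (0,π): let R and L be the shift operators on L²(0,π) defined on u = Σ_{k≥1} a_k sin(kx) by Ru = Σ_{k≥1} a_k sin((k−1)x) and Lu = Σ_{k≥1} a_k sin((k+1)x), and let T = (R − L)/2. Then for all α, β ≥ 0 with α + β ≤ 1 and all t > 0: ‖A^α T A^β e^{−At}‖ ≤ ((4^α + 1)/2) ‖A^{α+β} e^{−At}‖, where A is the Dirichlet Laplacian with eigenvalues k². -/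
open Real

/- Coefficient (Fourier-sine) model on `(0,π)`: a function
`u = Σ_{k≥1} a_k sin(kx)` is represented by its coefficient sequence
`c : ℕ → ℝ` with `c j = a_{j+1}`. -/
namespace Stmt15

/-- The shift operator `R`: `Ru = Σ a_k sin((k-1)x)` (the `k = 1` term
vanishes since `sin 0 = 0`), i.e. `(Rc)_j = c_{j+1}` in coefficients. -/
def coefR (c : ℕ → ℝ) : ℕ → ℝ := fun j => c (j + 1)

/-- The shift operator `L`: `Lu = Σ a_k sin((k+1)x)`, i.e.
`(Lc)_j = c_{j-1}` with `(Lc)_0 = 0`. -/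
def coefL (c : ℕ → ℝ) : ℕ → ℝ := fun j => if j = 0 then 0 else c (j - 1)

/-- `T = (R - L)/2`. -/
noncomputable def coefT (c : ℕ → ℝ) : ℕ → ℝ := fun j => (coefR c j - coefL c j) / 2

/-- Fractional power `A^γ` of the Dirichlet Laplacian (eigenvalues `k²`). -/
noncomputable def Afrac (γ : ℝ) (c : ℕ → ℝ) : ℕ → ℝ :=
  fun j => ((j + 1 : ℝ)) ^ (2 * γ) * c j

/-- The heat semigroup `e^{-At}`. -/
noncomputable def heat (t : ℝ) (c : ℕ → ℝ) : ℕ → ℝ :=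
  fun j => exp (-((j + 1 : ℝ) ^ 2) * t) * c j

set_option maxHeartbeats 1000000 in
/-- `‖A^α T A^β e^{-At} u‖ ≤ ((4^α+1)/2) ‖A^{α+β} e^{-At}‖ ‖u‖` in the
`L²`-coefficient model, where `‖A^{α+β} e^{-At}‖ = sup_k k^{2(α+β)} e^{-k²t}`. -/
theorem stmt15 (α β t : ℝ) (hα : 0 ≤ α) (hβ : 0 ≤ β) (hαβ : α + β ≤ 1)
    (ht : 0 < t) (a : ℕ → ℝ) (hsum : Summable fun j => (a j) ^ 2) :
    ∑' j : ℕ, (Afrac α (coefT (Afrac β (heat t a))) j) ^ 2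
      ≤ (((4 : ℝ) ^ α + 1) / 2) ^ 2 *
          (⨆ j : ℕ, ((j + 1 : ℝ)) ^ (2 * (α + β)) * exp (-((j + 1 : ℝ) ^ 2) * t)) ^ 2 *
          ∑' j : ℕ, (a j) ^ 2 := by
  set γ := α + β with hγ
  set M := ⨆ j : ℕ, ((j + 1 : ℝ)) ^ (2 * γ) * exp (-((j + 1 : ℝ) ^ 2) * t) with hMdef
  set s := (4 : ℝ) ^ α with hsdef
  have hs0 : 0 < s := rpow_pos_of_pos (by norm_num) α
  -- bounded above
  have hxe : ∀ x : ℝ, 0 ≤ x → x * exp (-x) ≤ 1 := by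
    intro x hx
    have h1 : x ≤ exp x := by linarith [Real.add_one_le_exp x]
    calc x * exp (-x) ≤ exp x * exp (-x) :=
          mul_le_mul_of_nonneg_right h1 (exp_pos _).le
      _ = 1 := by rw [← Real.exp_add]; simp
  have hbdd : BddAbove (Set.range fun j : ℕ =>
      ((j + 1 : ℝ)) ^ (2 * γ) * exp (-((j + 1 : ℝ) ^ 2) * t)) := by
    refine ⟨1 / t, ?_⟩
    rintro x ⟨j, rfl⟩
    have h1 : (1 : ℝ) ≤ (j : ℝ) + 1 := by
      have := Nat.cast_nonneg (α := ℝ) j; linarith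
    have h2 : ((j : ℝ) + 1) ^ (2 * γ) ≤ ((j : ℝ) + 1) ^ (2 : ℝ) :=
      rpow_le_rpow_of_exponent_le h1 (by simp only [hγ]; linarith)
    have h3 : ((j : ℝ) + 1) ^ (2 : ℝ) = ((j : ℝ) + 1) ^ 2 := Real.rpow_two _
    have h4 : ((j : ℝ) + 1) ^ 2 * exp (-(((j : ℝ) + 1) ^ 2) * t) ≤ 1 / t := by
      have hy : 0 ≤ ((j : ℝ) + 1) ^ 2 * t := by positivity
      have hkey := hxe _ hy
      have hexpand : ((j : ℝ) + 1) ^ 2 * exp (-(((j : ℝ) + 1) ^ 2) * t)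
          = (1 / t) * ((((j : ℝ) + 1) ^ 2 * t) * exp (-(((j : ℝ) + 1) ^ 2 * t))) := by
        rw [neg_mul]
        field_simp
      rw [hexpand]
      calc (1 / t) * ((((j : ℝ) + 1) ^ 2 * t) * exp (-(((j : ℝ) + 1) ^ 2 * t)))
          ≤ (1 / t) * 1 := mul_le_mul_of_nonneg_left hkey (by positivity)
        _ = 1 / t := mul_one _
    calc ((j : ℝ) + 1) ^ (2 * γ) * exp (-(((j : ℝ) + 1) ^ 2) * t)
        ≤ ((j : ℝ) + 1) ^ 2 * exp (-(((j : ℝ) + 1) ^ 2) * t) := by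
          rw [← h3]; exact mul_le_mul_of_nonneg_right h2 (exp_pos _).le
      _ ≤ 1 / t := h4
  have hMle : ∀ j : ℕ, ((j : ℝ) + 1) ^ (2 * γ) * exp (-(((j : ℝ) + 1) ^ 2) * t) ≤ M :=
    fun j => le_ciSup hbdd j
  have hM0 : 0 ≤ M := le_trans (by positivity) (hMle 0)
  -- the shifted pieces
  set b := Afrac β (heat t a) with hbdef
  set P : ℕ → ℝ := fun j => ((j : ℝ) + 1) ^ (2 * α) * b (j + 1) with hPdef
  set Q : ℕ → ℝ := fun j => if j = 0 then 0 else ((j : ℝ) + 1) ^ (2 * α) * b (j - 1) with hQdef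
  have hval : ∀ j : ℕ, Afrac α (coefT b) j = (P j - Q j) / 2 := by
    intro j
    simp only [Afrac, coefT, coefR, coefL, hPdef, hQdef]
    by_cases h : j = 0 <;> simp [h] <;> ring
  -- bound on P
  have hP2 : ∀ j : ℕ, (P j) ^ 2 ≤ M ^ 2 * (a (j + 1)) ^ 2 := by
    intro j
    have h1 : ((j : ℝ) + 1) ^ (2 * α) ≤ ((j : ℝ) + 2) ^ (2 * α) :=
      rpow_le_rpow (by positivity) (by linarith) (by positivity)
    have h2 : ((j : ℝ) + 2) ^ (2 * α) * ((j : ℝ) + 2) ^ (2 * β) = ((j : ℝ) + 2) ^ (2 * γ) := by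
      rw [← Real.rpow_add (by positivity), hγ]; ring_nf
    have h3 := hMle (j + 1)
    push_cast at h3
    have hC : ((j : ℝ) + 1) ^ (2 * α) * (((j : ℝ) + 2) ^ (2 * β) * exp (-(((j : ℝ) + 2) ^ 2) * t))
        ≤ M := by
      calc ((j : ℝ) + 1) ^ (2 * α) * (((j : ℝ) + 2) ^ (2 * β) * exp (-(((j : ℝ) + 2) ^ 2) * t))
          ≤ ((j : ℝ) + 2) ^ (2 * α) * (((j : ℝ) + 2) ^ (2 * β) * exp (-(((j : ℝ) + 2) ^ 2) * t)) :=
            mul_le_mul_of_nonneg_right h1 (by positivity)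
        _ = ((j : ℝ) + 2) ^ (2 * γ) * exp (-(((j : ℝ) + 2) ^ 2) * t) := by
            rw [← mul_assoc, h2]
        _ ≤ M := by
            rw [show ((j : ℝ) + 2) = (j : ℝ) + 1 + 1 by ring]
            exact h3
    have hPeq : P j = (((j : ℝ) + 1) ^ (2 * α) *
        (((j : ℝ) + 2) ^ (2 * β) * exp (-(((j : ℝ) + 2) ^ 2) * t))) * a (j + 1) := by
      simp only [hPdef, hbdef, Afrac, heat]
      push_cast
      ring_nf
    rw [hPeq, mul_pow]
    exact mul_le_mul_of_nonneg_right
      (pow_le_pow_left₀ (by positivity) hC 2) (sq_nonneg _)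
  -- bound on Q
  have hs2 : s = (2 : ℝ) ^ (2 * α) := by
    rw [hsdef, show (4 : ℝ) = (2 : ℝ) ^ (2 : ℝ) by
        rw [Real.rpow_two]; norm_num,
      ← Real.rpow_mul (by norm_num)]
  have hQ2 : ∀ j : ℕ, (Q j) ^ 2 ≤ s ^ 2 * (M ^ 2 * (if j = 0 then (0:ℝ) else (a (j - 1)) ^ 2)) := by
    intro j
    match j with
    | 0 => simp [hQdef]
    | (k + 1) =>
      simp only [hQdef, Nat.add_sub_cancel, if_neg (Nat.succ_ne_zero k)]
      have h1 : ((k : ℝ) + 1 + 1) ^ (2 * α) ≤ s * ((k : ℝ) + 1) ^ (2 * α) := by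
        have hle : (k : ℝ) + 1 + 1 ≤ 2 * ((k : ℝ) + 1) := by
          have := Nat.cast_nonneg (α := ℝ) k; linarith
        calc ((k : ℝ) + 1 + 1) ^ (2 * α) ≤ (2 * ((k : ℝ) + 1)) ^ (2 * α) :=
              rpow_le_rpow (by positivity) hle (by positivity)
          _ = (2 : ℝ) ^ (2 * α) * ((k : ℝ) + 1) ^ (2 * α) :=
              Real.mul_rpow (by norm_num) (by positivity)
          _ = s * ((k : ℝ) + 1) ^ (2 * α) := by rw [hs2]
      have h2 : ((k : ℝ) + 1) ^ (2 * α) * ((k : ℝ) + 1) ^ (2 * β) = ((k : ℝ) + 1) ^ (2 * γ) := by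
        rw [← Real.rpow_add (by positivity), hγ]; ring_nf
      have h3 := hMle k
      have hD : (((k + 1 : ℕ) : ℝ) + 1) ^ (2 * α) *
          (((k : ℝ) + 1) ^ (2 * β) * exp (-(((k : ℝ) + 1) ^ 2) * t)) ≤ s * M := by
        push_cast
        calc ((k : ℝ) + 1 + 1) ^ (2 * α) *
              (((k : ℝ) + 1) ^ (2 * β) * exp (-(((k : ℝ) + 1) ^ 2) * t))
            ≤ (s * ((k : ℝ) + 1) ^ (2 * α)) *
              (((k : ℝ) + 1) ^ (2 * β) * exp (-(((k : ℝ) + 1) ^ 2) * t)) :=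
              mul_le_mul_of_nonneg_right h1 (by positivity)
          _ = s * (((k : ℝ) + 1) ^ (2 * γ) * exp (-(((k : ℝ) + 1) ^ 2) * t)) := by
              rw [← h2]; ring
          _ ≤ s * M := mul_le_mul_of_nonneg_left h3 hs0.le
      have hQeq : (((k + 1 : ℕ) : ℝ) + 1) ^ (2 * α) * b k
          = ((((k + 1 : ℕ) : ℝ) + 1) ^ (2 * α) *
            (((k : ℝ) + 1) ^ (2 * β) * exp (-(((k : ℝ) + 1) ^ 2) * t))) * a k := by
        simp only [hbdef, Afrac, heat]
        ring
      rw [hQeq, mul_pow]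
      calc ((((k + 1 : ℕ) : ℝ) + 1) ^ (2 * α) *
            (((k : ℝ) + 1) ^ (2 * β) * exp (-(((k : ℝ) + 1) ^ 2) * t))) ^ 2 * (a k) ^ 2
          ≤ (s * M) ^ 2 * (a k) ^ 2 :=
            mul_le_mul_of_nonneg_right (pow_le_pow_left₀ (by positivity) hD 2) (sq_nonneg _)
        _ = s ^ 2 * (M ^ 2 * (a k) ^ 2) := by ring
  -- pointwise bound
  set G : ℕ → ℝ := fun j => ((1 + s) * (M ^ 2 * (a (j + 1)) ^ 2)
      + (s ^ 2 + s) * (M ^ 2 * (if j = 0 then (0:ℝ) else (a (j - 1)) ^ 2))) / 4 with hGdef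
  have hpt : ∀ j : ℕ, (Afrac α (coefT b) j) ^ 2 ≤ G j := by
    intro j
    rw [hval j]
    have h1 := hP2 j
    have h2 := hQ2 j
    have h3 := sq_nonneg (s * P j + Q j)
    have h4 : (0:ℝ) ≤ if j = 0 then (0:ℝ) else (a (j - 1)) ^ 2 := by positivity
    simp only [hGdef]
    rw [div_pow]
    rw [div_le_div_iff₀ (by norm_num) (by norm_num)]
    nlinarith [mul_le_mul_of_nonneg_left h1 (mul_pos hs0 (by linarith : (0:ℝ) < 1 + s)).le,
      mul_le_mul_of_nonneg_left h2 (by linarith : (0:ℝ) ≤ 1 + s),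
      mul_le_mul_of_nonneg_left h3 hs0.le, hs0.le, sq_nonneg (P j), sq_nonneg (Q j)]
  -- summability
  have hsum1 : Summable fun j => (a (j + 1)) ^ 2 := (summable_nat_add_iff 1).mpr hsum
  have hsum2 : Summable fun j : ℕ => (if j = 0 then (0:ℝ) else (a (j - 1)) ^ 2) := by
    rw [← summable_nat_add_iff 1]
    simpa using hsum
  have hGsum : Summable G := by
    apply Summable.div_const
    exact ((hsum1.mul_left (M ^ 2)).mul_left (1 + s)).add
      (((hsum2.mul_left (M ^ 2)).mul_left (s ^ 2 + s)))
  have hvsum : Summable fun j => (Afrac α (coefT b) j) ^ 2 :=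
    Summable.of_nonneg_of_le (fun j => sq_nonneg _) hpt hGsum
  -- sums
  have hS0 : (0:ℝ) ≤ ∑' j, (a j) ^ 2 := tsum_nonneg fun j => sq_nonneg _
  have hT1 : ∑' j, (a (j + 1)) ^ 2 ≤ ∑' j, (a j) ^ 2 := by
    rw [Summable.tsum_eq_zero_add hsum]
    nlinarith [sq_nonneg (a 0)]
  have hT2 : ∑' j : ℕ, (if j = 0 then (0:ℝ) else (a (j - 1)) ^ 2) = ∑' j, (a j) ^ 2 := by
    rw [Summable.tsum_eq_zero_add hsum2]
    simp
  calc ∑' j : ℕ, (Afrac α (coefT b) j) ^ 2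
      ≤ ∑' j, G j := Summable.tsum_le_tsum hpt hvsum hGsum
    _ = ((1 + s) * (M ^ 2 * ∑' j, (a (j + 1)) ^ 2)
        + (s ^ 2 + s) * (M ^ 2 * ∑' j : ℕ, (if j = 0 then (0:ℝ) else (a (j - 1)) ^ 2))) / 4 := by
        simp only [hGdef]
        rw [tsum_div_const,
          Summable.tsum_add ((hsum1.mul_left (M ^ 2)).mul_left (1 + s))
            ((hsum2.mul_left (M ^ 2)).mul_left (s ^ 2 + s)),
          tsum_mul_left, tsum_mul_left, tsum_mul_left, tsum_mul_left]
    _ ≤ ((s + 1) / 2) ^ 2 * M ^ 2 * ∑' j, (a j) ^ 2 := by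
        rw [hT2]
        have h5 : M ^ 2 * ∑' j, (a (j + 1)) ^ 2 ≤ M ^ 2 * ∑' j, (a j) ^ 2 :=
          mul_le_mul_of_nonneg_left hT1 (sq_nonneg M)
        nlinarith [mul_le_mul_of_nonneg_left h5 (by linarith : (0:ℝ) ≤ 1 + s),
          mul_nonneg (sq_nonneg M) hS0, hs0.le]
    _ = (((4 : ℝ) ^ α + 1) / 2) ^ 2 * M ^ 2 * ∑' j, (a j) ^ 2 := by rw [hsdef]

end Stmt15
end

section
/- Exponential decay of impulsive evolution products: let b ≥ 0, θ > 0, and let (τ_j)_{j∈ℤ} be increasing with τ_{j+1} − τ_j ≥ θ, and suppose p ln(1+b) < 1 where p = lim_{T→∞} i(t, t+T)/T exists uniformly (i(s,t) counts points in (s,t)). Assume each factor satisfies ‖(I + B_j) e^{−A(τ_j − τ_{j−1})}‖ ≤ (1 + b) e^{−(τ_j − τ_{j−1})}. Then there exist ε₁ > 0 and N₁ ≥ 1 such that for all i ∈ ℤ and k ≥ 1: ∏_{j=i−k+1}^{i} ‖(I + B_j) e^{−A(τ_j − τ_{j−1})}‖ ≤ N₁ e^{−ε₁ (τ_i − τ_{i−k})}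 ≤ N₁ e^{−ε₁ θ k}. -/
open Real

/-- `impCount τ s t` = number of impulse points `τ k` in `(s, t)`. -/
noncomputable def impCount17 (τ : ℤ → ℝ) (s t : ℝ) : ℕ :=
  Nat.card {k : ℤ | s < τ k ∧ τ k < t}

lemma telescope17 (τ : ℤ → ℝ) (i : ℤ) (k : ℕ) :
    ∑ j ∈ Finset.Icc (i - k + 1) i, (τ j - τ (j - 1)) = τ i - τ (i - k) := by
  induction k with
  | zero => simp
  | succ k ih =>
      have h1 : (i - (k + 1 : ℕ) + 1 : ℤ) = i - k := by push_cast; ring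
      have h2 : (i - (k : ℕ) : ℤ) ∉ Finset.Icc (i - k + 1 : ℤ) i := by
        simp
      have h3 : Finset.Icc (i - k : ℤ) i = insert (i - k : ℤ) (Finset.Icc (i - k + 1 : ℤ) i) := by
        ext x
        simp only [Finset.mem_Icc, Finset.mem_insert]
        omega
      rw [h1, h3, Finset.sum_insert h2, ih]
      have h4 : (i - (k : ℕ) - 1 : ℤ) = i - ((k : ℕ) + 1 : ℕ) := by push_cast; ring
      rw [h4]; ring

lemma gapbound17 (τ : ℤ → ℝ) (θ : ℝ) (hgap : ∀ j : ℤ, θ ≤ τ (j + 1) - τ j)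
    (i : ℤ) (k : ℕ) : θ * k ≤ τ i - τ (i - k) := by
  induction k with
  | zero => simp
  | succ k ih =>
      have h := hgap (i - (k + 1 : ℕ))
      have h1 : (i - ((k : ℕ) + 1 : ℕ) + 1 : ℤ) = i - k := by push_cast; ring
      rw [h1] at h
      push_cast at h ih ⊢
      nlinarith

lemma count17 (τ : ℤ → ℝ) (hmono : StrictMono τ) (i : ℤ) (k : ℕ) (hk : 1 ≤ k) :
    (impCount17 τ (τ (i - k)) (τ i) : ℤ) = (k : ℤ) - 1 := by
  have hset : {m : ℤ | τ (i - k) < τ m ∧ τ m < τ i} = ↑(Finset.Ioo (i - k : ℤ) i) := by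
    ext m
    simp only [Set.mem_setOf_eq, Finset.coe_Ioo, Set.mem_Ioo]
    constructor
    · rintro ⟨h1, h2⟩; exact ⟨hmono.lt_iff_lt.mp h1, hmono.lt_iff_lt.mp h2⟩
    · rintro ⟨h1, h2⟩; exact ⟨hmono h1, hmono h2⟩
  unfold impCount17
  rw [hset, Nat.card_coe_set_eq, Set.ncard_coe_finset, Int.card_Ioo]
  have : (i - (i - (k : ℤ)) - 1) = (k : ℤ) - 1 := by ring
  rw [this, Int.toNat_sub_of_le (by exact_mod_cast hk)]

theorem stmt17 (τ : ℤ → ℝ) (f : ℤ → ℝ) (b θ p : ℝ)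
    (hb : 0 ≤ b) (hθ : 0 < θ) (hp : 0 ≤ p)
    (hmono : StrictMono τ)
    (hgap : ∀ j : ℤ, θ ≤ τ (j + 1) - τ j)
    (hlim : ∀ ε : ℝ, 0 < ε → ∃ T₀ : ℝ, 0 < T₀ ∧ ∀ s t : ℝ, T₀ ≤ t - s →
      |(impCount17 τ s t : ℝ) / (t - s) - p| < ε)
    (hplog : p * Real.log (1 + b) < 1)
    (hf0 : ∀ j : ℤ, 0 ≤ f j)
    (hf : ∀ j : ℤ, f j ≤ (1 + b) * exp (-(τ j - τ (j - 1)))) :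
    ∃ ε₁ : ℝ, 0 < ε₁ ∧ ∃ N₁ : ℝ, 1 ≤ N₁ ∧
      ∀ i : ℤ, ∀ k : ℕ, 1 ≤ k →
        (∏ j ∈ Finset.Icc (i - k + 1) i, f j)
            ≤ N₁ * exp (-ε₁ * (τ i - τ (i - k))) ∧
          N₁ * exp (-ε₁ * (τ i - τ (i - k))) ≤ N₁ * exp (-ε₁ * θ * k) := by
  set L := Real.log (1 + b) with hL
  have hb1 : (0:ℝ) < 1 + b := by linarith
  have hL0 : 0 ≤ L := Real.log_nonneg (by linarith)
  set δ := (1 - p * L) / (2 * (1 + L)) with hδdef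
  have hδ : 0 < δ := by
    apply div_pos (by linarith) (by linarith)
  have hδL : δ * (1 + L) ≤ 1 - p * L := by
    rw [hδdef, div_mul_eq_mul_div]
    rw [div_le_iff₀ (by linarith)]
    nlinarith
  have hδ1 : δ ≤ 1 := by nlinarith
  obtain ⟨T₀, hT₀, hT⟩ := hlim δ hδ
  refine ⟨δ, hδ, exp (L + T₀ * L / θ), ?_, ?_⟩
  · rw [← Real.exp_zero]
    apply Real.exp_le_exp.mpr
    have : 0 ≤ T₀ * L / θ := by positivity
    linarith
  intro i k hk
  set s := τ (i - k) with hs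
  set t := τ i with ht
  have hts : θ * k ≤ t - s := gapbound17 τ θ hgap i k
  have hts0 : 0 ≤ t - s := le_trans (by positivity) hts
  constructor
  swap
  · exact mul_le_mul_of_nonneg_left (Real.exp_le_exp.mpr (by nlinarith)) (Real.exp_nonneg _)
  -- main inequality
  · -- product bound
    have hcard : (Finset.Icc (i - k + 1 : ℤ) i).card = k := by
      rw [Int.card_Icc]
      have : (i + 1 - (i - (k:ℤ) + 1)) = (k : ℤ) := by ring
      rw [this, Int.toNat_natCast]
    have hprod : (∏ j ∈ Finset.Icc (i - k + 1 : ℤ) i, f j)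
        ≤ exp ((k : ℝ) * L - (t - s)) := by
      calc (∏ j ∈ Finset.Icc (i - k + 1 : ℤ) i, f j)
          ≤ ∏ j ∈ Finset.Icc (i - k + 1 : ℤ) i, (1 + b) * exp (-(τ j - τ (j - 1))) := by
            apply Finset.prod_le_prod (fun j _ => hf0 j) (fun j _ => hf j)
        _ = (1 + b) ^ k * exp (-(t - s)) := by
            rw [Finset.prod_mul_distrib, Finset.prod_const, hcard, ← Real.exp_sum,
              Finset.sum_neg_distrib, telescope17]
        _ = exp ((k : ℝ) * L - (t - s)) := by
            rw [← Real.exp_log hb1, ← Real.exp_nat_mul, ← Real.exp_add, hL]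
            ring_nf
    have key : (k : ℝ) * L - (t - s) ≤ (L + T₀ * L / θ) + (-δ * (t - s)) := by
      by_cases hbig : T₀ ≤ t - s
      · have hcnt := hT s t hbig
        rw [hs, ht] at hcnt
        have hc : (impCount17 τ (τ (i - k)) (τ i) : ℝ) = (k : ℝ) - 1 := by
          have := count17 τ hmono i k hk
          exact_mod_cast this
        rw [hc] at hcnt
        have hpos : 0 < t - s := lt_of_lt_of_le hT₀ hbig
        rw [abs_lt] at hcnt
        have hk1 : (k : ℝ) - 1 < (p + δ) * (t - s) := by
          have := hcnt.2
          rw [div_sub' (ne_of_gt hpos), div_lt_iff₀ hpos] at this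
          · nlinarith
        have hkb : (k : ℝ) ≤ (p + δ) * (t - s) + 1 := by linarith
        have hkL : (k : ℝ) * L ≤ ((p + δ) * (t - s) + 1) * L :=
          mul_le_mul_of_nonneg_right hkb hL0
        have hcoef : (p + δ) * L - 1 ≤ -δ := by nlinarith
        have h0 : 0 ≤ T₀ * L / θ := by positivity
        nlinarith [mul_le_mul_of_nonneg_right hcoef hts0]
      · push_neg at hbig
        have hkT : (k : ℝ) ≤ T₀ / θ := by
          rw [le_div_iff₀ hθ]
          nlinarith
        have hkL : (k : ℝ) * L ≤ T₀ * L / θ := by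
          rw [div_mul_eq_mul_div] at *
          calc (k : ℝ) * L ≤ (T₀ / θ) * L := mul_le_mul_of_nonneg_right hkT hL0
            _ = T₀ * L / θ := by ring
        nlinarith
    calc (∏ j ∈ Finset.Icc (i - k + 1 : ℤ) i, f j)
        ≤ exp ((k : ℝ) * L - (t - s)) := hprod
      _ ≤ exp ((L + T₀ * L / θ) + (-δ * (t - s))) := Real.exp_le_exp.mpr key
      _ = exp (L + T₀ * L / θ) * exp (-δ * (t - s)) := Real.exp_add _ _
end
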